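/- (Variational upper bound on the modality-exclusive term.) Let V, T, Z be random variables with finite ranges such that Z is conditionally independent of T given V. Then for every family (q_t) of probability distributions on the range of Z, indexed by the values t of T, the conditional mutual information satisfies I(V; Z | T) ≤ ∑_{(v,t)} P(V=v, T=t) · KL( P_{Z | V=v} ‖ q_t ), where P_{Z | V=v} is the conditional distribution of Z given V=v and the sum ranges over pairs (v,t) with P(V=v, T=t) > 0. -/

import Mathlib

open MeasureTheory ProbabilityTheory

namespace DisNCL

variable {Ω : Type*} [MeasurableSpace Ω]

/-- The probability that a random variable `X` takes the value `x`. -/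
noncomputable def pr {S : Type*} (μ : Measure Ω) (X : Ω → S) (x : S) : ℝ :=
  (μ {ω | X ω = x}).toReal

/-- Shannon entropy `H(X)` of a finitely-valued random variable. -/
noncomputable def H {S : Type*} [Fintype S] (μ : Measure Ω) (X : Ω → S) : ℝ :=
  -∑ x, pr μ X x * Real.log (pr μ X x)

/-- Conditional entropy `H(X | Y) = ∑ y P(Y = y) H(X | Y = y)`, where the inner entropy
is taken under the conditional measure given `Y = y`. -/
noncomputable def condH {S T : Type*} [Fintype S] [Fintype T]
    (μ : Measure Ω) (X : Ω → S) (Y : Ω → T) : ℝ :=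
  ∑ y, pr μ Y y * H (ProbabilityTheory.cond μ {ω | Y ω = y}) X

/-- Mutual information `I(X;Y) = H(X) + H(Y) - H(X,Y)`. -/
noncomputable def MI {S T : Type*} [Fintype S] [Fintype T]
    (μ : Measure Ω) (X : Ω → S) (Y : Ω → T) : ℝ :=
  H μ X + H μ Y - H μ (fun ω => (X ω, Y ω))

/-- Conditional mutual information `I(X;Y|Z) = ∑ z P(Z = z) I(X;Y | Z = z)`, where the
inner mutual information is taken under the conditional measure given `Z = z`. -/
noncomputable def CMI {S T U : Type*} [Fintype S] [Fintype T] [Fintype U]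
    (μ : Measure Ω) (X : Ω → S) (Y : Ω → T) (Z : Ω → U) : ℝ :=
  ∑ z, pr μ Z z * MI (ProbabilityTheory.cond μ {ω | Z ω = z}) X Y

/-- `X` and `Y` are conditionally independent given `Z`
(written `X ⊥ Y | Z`): for all values,
`P(X = x, Y = y, Z = z) ⬝ P(Z = z) = P(X = x, Z = z) ⬝ P(Y = y, Z = z)`. -/
def CondIndep {S T U : Type*} (μ : Measure Ω) (X : Ω → S) (Y : Ω → T) (Z : Ω → U) : Prop :=
  ∀ (x : S) (y : T) (z : U),
    pr μ (fun ω => (X ω, Y ω, Z ω)) (x, y, z) * pr μ Z z =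
      pr μ (fun ω => (X ω, Z ω)) (x, z) * pr μ (fun ω => (Y ω, Z ω)) (y, z)

/-- Kullback–Leibler divergence between two distributions on a finite set, with the
convention that it is `+∞` unless `p` is absolutely continuous with respect to `q`. -/
noncomputable def klDiv {S : Type*} [Fintype S] (p q : S → ℝ) : EReal :=
  if ∀ z, q z = 0 → p z = 0 then ((∑ z, p z * Real.log (p z / q z) : ℝ) : EReal)
  else ⊤

/- ### Auxiliary lemmas -/

lemma measure_eq_sum_inter_rv {B : Type*} [Fintype B] [MeasurableSpace B]
    [MeasurableSingletonClass B]
    (μ : Measure Ω) {s : Set Ω} (hs : MeasurableSet s) {Y : Ω → B} (hY : Measurable Y) :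
    μ s = ∑ b, μ (s ∩ {ω | Y ω = b}) := by
  have hset : s = ⋃ b ∈ (Finset.univ : Finset B), s ∩ {ω | Y ω = b} := by
    ext ω; simp
  have hd : ((Finset.univ : Finset B) : Set B).PairwiseDisjoint
      (fun b => s ∩ {ω | Y ω = b}) := by
    intro b _ c _ hbc
    simp only [Function.onFun, Set.disjoint_left]
    rintro ω ⟨-, hb⟩ ⟨-, hc⟩
    exact hbc (hb.symm.trans hc)
  have hm : ∀ b ∈ (Finset.univ : Finset B), MeasurableSet (s ∩ {ω | Y ω = b}) := by
    intro b _
    exact hs.inter (hY (measurableSet_singleton b))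
  calc μ s = μ (⋃ b ∈ (Finset.univ : Finset B), s ∩ {ω | Y ω = b}) := by rw [← hset]
    _ = ∑ b, μ (s ∩ {ω | Y ω = b}) := measure_biUnion_finset hd hm

lemma toReal_measure_eq_sum_inter {B : Type*} [Fintype B] [MeasurableSpace B]
    [MeasurableSingletonClass B]
    (μ : Measure Ω) [IsFiniteMeasure μ] {s : Set Ω} (hs : MeasurableSet s)
    {Y : Ω → B} (hY : Measurable Y) :
    (μ s).toReal = ∑ b, (μ (s ∩ {ω | Y ω = b})).toReal := by
  rw [measure_eq_sum_inter_rv μ hs hY, ENNReal.toReal_sum]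
  intro b _; exact measure_ne_top μ _

lemma pr_cond_eq' {A : Type*} (μ : Measure Ω) {s : Set Ω} (hs : MeasurableSet s)
    (X : Ω → A) (x : A) :
    ((ProbabilityTheory.cond μ s) {ω | X ω = x}).toReal
      = (μ (s ∩ {ω | X ω = x})).toReal / (μ s).toReal := by
  rw [cond_apply hs, ENNReal.toReal_mul, ENNReal.toReal_inv]
  ring

lemma gibbs' {A : Type*} [Fintype A] (p q : A → ℝ) (hp : ∀ a, 0 ≤ p a) (hq : ∀ a, 0 ≤ q a)
    (hsum : ∑ a, q a ≤ ∑ a, p a) (hac : ∀ a, q a = 0 → p a = 0) :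
    0 ≤ ∑ a, p a * Real.log (p a / q a) := by
  have key : ∀ a, p a - q a ≤ p a * Real.log (p a / q a) := by
    intro a
    rcases eq_or_lt_of_le (hp a) with h0 | hpa
    · simp [← h0]
      linarith [hq a]
    · have hqa : 0 < q a := lt_of_le_of_ne (hq a) fun h => by
        have := hac a h.symm; linarith
      have hlog : Real.log (q a / p a) ≤ q a / p a - 1 :=
        Real.log_le_sub_one_of_pos (by positivity)
      have hneg : Real.log (p a / q a) = - Real.log (q a / p a) := by
        rw [← Real.log_inv]; congr 1; field_simp
      rw [hneg]
      have h2 : p a * (1 - q a / p a) ≤ p a * (- Real.log (q a / p a)) := by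
        apply mul_le_mul_of_nonneg_left _ (le_of_lt hpa)
        linarith
      have h3 : p a * (1 - q a / p a) = p a - q a := by field_simp
      linarith
  calc (0:ℝ) = (∑ a, p a) - ∑ a, p a := by ring
    _ ≤ (∑ a, p a) - ∑ a, q a := by linarith
    _ = ∑ a, (p a - q a) := by rw [Finset.sum_sub_distrib]
    _ ≤ ∑ a, p a * Real.log (p a / q a) := Finset.sum_le_sum fun a _ => key a

lemma MI_formula {A B : Type*} [Fintype A] [Fintype B] (p : A → B → ℝ) (hp : ∀ a b, 0 ≤ p a b)
    (pa : A → ℝ) (pb : B → ℝ) (ha : ∀ a, pa a = ∑ b, p a b) (hb : ∀ b, pb b = ∑ a, p a b) :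
    (-∑ a, pa a * Real.log (pa a)) + (-∑ b, pb b * Real.log (pb b))
      - (-∑ a, ∑ b, p a b * Real.log (p a b))
      = ∑ a, ∑ b, p a b * Real.log (p a b / (pa a * pb b)) := by
  have hA : ∑ a, pa a * Real.log (pa a) = ∑ a, ∑ b, p a b * Real.log (pa a) := by
    refine Finset.sum_congr rfl fun a _ => ?_
    rw [ha a, Finset.sum_mul]
  have hB : ∑ b, pb b * Real.log (pb b) = ∑ a, ∑ b, p a b * Real.log (pb b) := by
    rw [Finset.sum_comm]
    refine Finset.sum_congr rfl fun b _ => ?_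
    rw [hb b, Finset.sum_mul]
  have key : ∀ a b, p a b * Real.log (p a b / (pa a * pb b))
      = p a b * Real.log (p a b) - p a b * Real.log (pa a) - p a b * Real.log (pb b) := by
    intro a b
    rcases eq_or_lt_of_le (hp a b) with h0 | hpos
    · simp [← h0]
    · have hpa : 0 < pa a := by
        have : p a b ≤ pa a := by
          rw [ha]; exact Finset.single_le_sum (fun b _ => hp a b) (Finset.mem_univ b)
        linarith
      have hpb : 0 < pb b := by
        have : p a b ≤ pb b := by
          rw [hb]; exact Finset.single_le_sum (fun a _ => hp a b) (Finset.mem_univ a)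
        linarith
      rw [Real.log_div (ne_of_gt hpos) (by positivity),
        Real.log_mul (ne_of_gt hpa) (ne_of_gt hpb)]
      ring
  rw [hA, hB]
  simp only [key, Finset.sum_sub_distrib]
  ring

lemma coe_sum_EReal {ι : Type*} (s : Finset ι) (F : ι → ℝ) :
    ((∑ i ∈ s, F i : ℝ) : EReal) = ∑ i ∈ s, ((F i : ℝ) : EReal) :=
  map_sum (⟨⟨Real.toEReal, EReal.coe_zero⟩, EReal.coe_add⟩ : ℝ →+ EReal) F s

theorem cmi_le_variational_klDiv
    {SV ST SZ : Type*}
    [Fintype SV] [Nonempty SV] [MeasurableSpace SV] [MeasurableSingletonClass SV]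
    [Fintype ST] [Nonempty ST] [MeasurableSpace ST] [MeasurableSingletonClass ST]
    [Fintype SZ] [Nonempty SZ] [MeasurableSpace SZ] [MeasurableSingletonClass SZ]
    (μ : Measure Ω) [IsProbabilityMeasure μ]
    (V : Ω → SV) (T : Ω → ST) (Z : Ω → SZ)
    (hV : Measurable V) (hT : Measurable T) (hZ : Measurable Z)
    (hZT : CondIndep μ Z T V)
    (q : ST → SZ → ℝ)
    (hq_nonneg : ∀ t z, 0 ≤ q t z) (hq_sum : ∀ t, ∑ z, q t z = 1) :
    (CMI μ V Z T : EReal) ≤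
      ∑ p ∈ Finset.univ.filter (fun p : SV × ST => 0 < pr μ (fun ω => (V ω, T ω)) p),
        ((pr μ (fun ω => (V ω, T ω)) p : EReal) *
          klDiv (fun z => pr (ProbabilityTheory.cond μ {ω | V ω = p.1}) Z z) (q p.2)) := by
  classical
  have mV : ∀ v, MeasurableSet {ω | V ω = v} := fun v => hV (measurableSet_singleton v)
  have mT : ∀ t, MeasurableSet {ω | T ω = t} := fun t => hT (measurableSet_singleton t)
  have mZ : ∀ z, MeasurableSet {ω | Z ω = z} := fun z => hZ (measurableSet_singleton z)
  set f : SV → ST → SZ → ℝ :=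
    fun v t z => (μ ({ω | V ω = v} ∩ {ω | T ω = t} ∩ {ω | Z ω = z})).toReal with hf
  set pT : ST → ℝ := fun t => (μ {ω | T ω = t}).toReal with hpT
  set pV : SV → ℝ := fun v => (μ {ω | V ω = v}).toReal with hpV
  set pVT : SV → ST → ℝ := fun v t => (μ ({ω | V ω = v} ∩ {ω | T ω = t})).toReal with hpVT
  set pZT : SZ → ST → ℝ := fun z t => (μ ({ω | T ω = t} ∩ {ω | Z ω = z})).toReal with hpZT
  set pZV : SZ → SV → ℝ := fun z v => (μ ({ω | V ω = v} ∩ {ω | Z ω = z})).toReal with hpZV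
  -- nonnegativity
  have fnn : ∀ v t z, 0 ≤ f v t z := fun _ _ _ => ENNReal.toReal_nonneg
  have pTnn : ∀ t, 0 ≤ pT t := fun _ => ENNReal.toReal_nonneg
  have pVnn : ∀ v, 0 ≤ pV v := fun _ => ENNReal.toReal_nonneg
  have pVTnn : ∀ v t, 0 ≤ pVT v t := fun _ _ => ENNReal.toReal_nonneg
  have pZTnn : ∀ z t, 0 ≤ pZT z t := fun _ _ => ENNReal.toReal_nonneg
  have pZVnn : ∀ z v, 0 ≤ pZV z v := fun _ _ => ENNReal.toReal_nonneg
  -- marginal identities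
  have hVT_sum : ∀ v t, pVT v t = ∑ z, f v t z := by
    intro v t
    simp only [hpVT, hf]
    exact toReal_measure_eq_sum_inter μ ((mV v).inter (mT t)) hZ
  have hZT_sum : ∀ z t, pZT z t = ∑ v, f v t z := by
    intro z t
    simp only [hpZT, hf]
    rw [toReal_measure_eq_sum_inter μ ((mT t).inter (mZ z)) hV]
    refine Finset.sum_congr rfl fun v _ => ?_
    have hs : ({ω | T ω = t} ∩ {ω | Z ω = z}) ∩ {ω | V ω = v}
        = {ω | V ω = v} ∩ {ω | T ω = t} ∩ {ω | Z ω = z} := by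
      ext ω; simp only [Set.mem_inter_iff, Set.mem_setOf_eq]; tauto
    rw [hs]
  have hT_sumV : ∀ t, pT t = ∑ v, pVT v t := by
    intro t
    simp only [hpT, hpVT]
    rw [toReal_measure_eq_sum_inter μ (mT t) hV]
    refine Finset.sum_congr rfl fun v _ => ?_
    have hs : {ω | T ω = t} ∩ {ω | V ω = v} = {ω | V ω = v} ∩ {ω | T ω = t} := by
      ext ω; simp only [Set.mem_inter_iff, Set.mem_setOf_eq]; tauto
    rw [hs]
  have hT_sumZ : ∀ t, pT t = ∑ z, pZT z t := by
    intro t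
    simp only [hpT, hpZT]
    exact toReal_measure_eq_sum_inter μ (mT t) hZ
  have hV_sumT : ∀ v, pV v = ∑ t, pVT v t := by
    intro v
    simp only [hpV, hpVT]
    exact toReal_measure_eq_sum_inter μ (mV v) hT
  have hV_sumZ : ∀ v, pV v = ∑ z, pZV z v := by
    intro v
    simp only [hpV, hpZV]
    exact toReal_measure_eq_sum_inter μ (mV v) hZ
  -- comparisons
  have hf_le_pVT : ∀ v t z, f v t z ≤ pVT v t := by
    intro v t z
    rw [hVT_sum]
    exact Finset.single_le_sum (fun z _ => fnn v t z) (Finset.mem_univ z)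
  have hf_le_pZT : ∀ v t z, f v t z ≤ pZT z t := by
    intro v t z
    rw [hZT_sum]
    exact Finset.single_le_sum (fun v _ => fnn v t z) (Finset.mem_univ v)
  have hpVT_le_pT : ∀ v t, pVT v t ≤ pT t := by
    intro v t
    rw [hT_sumV]
    exact Finset.single_le_sum (fun v _ => pVTnn v t) (Finset.mem_univ v)
  have hpVT_le_pV : ∀ v t, pVT v t ≤ pV v := by
    intro v t
    rw [hV_sumT]
    exact Finset.single_le_sum (fun t _ => pVTnn v t) (Finset.mem_univ t)
  have hpZT_le_pT : ∀ z t, pZT z t ≤ pT t := by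
    intro z t
    rw [hT_sumZ]
    exact Finset.single_le_sum (fun z _ => pZTnn z t) (Finset.mem_univ z)
  -- translations of `pr`
  have hprT : ∀ t, pr μ T t = pT t := fun t => by simp only [pr, hpT]
  have hprV : ∀ v, pr μ V v = pV v := fun v => by simp only [pr, hpV]
  have hprVT : ∀ v t, pr μ (fun ω => (V ω, T ω)) (v, t) = pVT v t := by
    intro v t
    simp only [pr, hpVT]
    have hs : {ω | (V ω, T ω) = (v, t)} = {ω | V ω = v} ∩ {ω | T ω = t} := by
      ext ω; simp only [Set.mem_inter_iff, Set.mem_setOf_eq, Prod.mk.injEq]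
    rw [hs]
  have hprTV : ∀ t v, pr μ (fun ω => (T ω, V ω)) (t, v) = pVT v t := by
    intro t v
    simp only [pr, hpVT]
    have hs : {ω | (T ω, V ω) = (t, v)} = {ω | V ω = v} ∩ {ω | T ω = t} := by
      ext ω; simp only [Set.mem_inter_iff, Set.mem_setOf_eq, Prod.mk.injEq]; tauto
    rw [hs]
  have hprZV : ∀ z v, pr μ (fun ω => (Z ω, V ω)) (z, v) = pZV z v := by
    intro z v
    simp only [pr, hpZV]
    have hs : {ω | (Z ω, V ω) = (z, v)} = {ω | V ω = v} ∩ {ω | Z ω = z} := by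
      ext ω; simp only [Set.mem_inter_iff, Set.mem_setOf_eq, Prod.mk.injEq]; tauto
    rw [hs]
  have hprZTV : ∀ z t v, pr μ (fun ω => (Z ω, T ω, V ω)) (z, t, v) = f v t z := by
    intro z t v
    simp only [pr, hf]
    have hs : {ω | (Z ω, T ω, V ω) = (z, t, v)}
        = {ω | V ω = v} ∩ {ω | T ω = t} ∩ {ω | Z ω = z} := by
      ext ω; simp only [Set.mem_inter_iff, Set.mem_setOf_eq, Prod.mk.injEq]; tauto
    rw [hs]
  -- conditional independence, rephrased
  have hci : ∀ v t z, f v t z * pV v = pZV z v * pVT v t := by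
    intro v t z
    have h := hZT z t v
    rw [hprZTV, hprV, hprZV, hprTV] at h
    exact h
  have hg : ∀ v t z, 0 < pVT v t → pZV z v / pV v = f v t z / pVT v t := by
    intro v t z hvt
    have hpVpos : 0 < pV v := lt_of_lt_of_le hvt (hpVT_le_pV v t)
    rw [div_eq_div_iff (ne_of_gt hpVpos) (ne_of_gt hvt)]
    linarith [hci v t z]
  -- Step 1 : CMI = L
  have hCMI : CMI μ V Z T
      = ∑ t, ∑ v, ∑ z, f v t z * Real.log (f v t z * pT t / (pVT v t * pZT z t)) := by
    unfold CMI
    refine Finset.sum_congr rfl fun t _ => ?_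
    rw [hprT]
    rcases eq_or_lt_of_le (pTnn t) with h0 | hpos
    · rw [← h0, zero_mul]
      symm
      refine Finset.sum_eq_zero fun v _ => Finset.sum_eq_zero fun z _ => ?_
      have hf0 : f v t z = 0 :=
        le_antisymm (by linarith [hf_le_pVT v t z, hpVT_le_pT v t]) (fnn v t z)
      rw [hf0, zero_mul]
    · have hpa : ∀ v, pr (ProbabilityTheory.cond μ {ω | T ω = t}) V v = pVT v t / pT t := by
        intro v
        simp only [pr]
        rw [pr_cond_eq' μ (mT t) V v]
        simp only [hpVT, hpT]
        have hs : {ω | T ω = t} ∩ {ω | V ω = v} = {ω | V ω = v} ∩ {ω | T ω = t} := by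
          ext ω; simp only [Set.mem_inter_iff, Set.mem_setOf_eq]; tauto
        rw [hs]
      have hpb : ∀ z, pr (ProbabilityTheory.cond μ {ω | T ω = t}) Z z = pZT z t / pT t := by
        intro z
        simp only [pr]
        rw [pr_cond_eq' μ (mT t) Z z]
      have hpab : ∀ v z, pr (ProbabilityTheory.cond μ {ω | T ω = t})
          (fun ω => (V ω, Z ω)) (v, z) = f v t z / pT t := by
        intro v z
        simp only [pr]
        rw [pr_cond_eq' μ (mT t) (fun ω => (V ω, Z ω)) (v, z)]
        simp only [hf, hpT]
        have hs : {ω | T ω = t} ∩ {ω | (V ω, Z ω) = (v, z)}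
            = {ω | V ω = v} ∩ {ω | T ω = t} ∩ {ω | Z ω = z} := by
          ext ω; simp only [Set.mem_inter_iff, Set.mem_setOf_eq, Prod.mk.injEq]; tauto
        rw [hs]
      have hMI : MI (ProbabilityTheory.cond μ {ω | T ω = t}) V Z
          = ∑ v, ∑ z, (f v t z / pT t) *
              Real.log ((f v t z / pT t) / ((pVT v t / pT t) * (pZT z t / pT t))) := by
        have hmarg1 : ∀ v, pVT v t / pT t = ∑ z, f v t z / pT t := by
          intro v; rw [hVT_sum, Finset.sum_div]
        have hmarg2 : ∀ z, pZT z t / pT t = ∑ v, f v t z / pT t := by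
          intro z; rw [hZT_sum, Finset.sum_div]
        unfold MI H
        rw [Fintype.sum_prod_type]
        simp only [hpa, hpb, hpab]
        exact MI_formula (fun v z => f v t z / pT t)
          (fun v z => div_nonneg (fnn v t z) (pTnn t))
          (fun v => pVT v t / pT t) (fun z => pZT z t / pT t) hmarg1 hmarg2
      rw [hMI, Finset.mul_sum]
      refine Finset.sum_congr rfl fun v _ => ?_
      rw [Finset.mul_sum]
      refine Finset.sum_congr rfl fun z _ => ?_
      rcases eq_or_lt_of_le (fnn v t z) with hf0 | hfpos
      · rw [← hf0]
        simp
      · have h1 : 0 < pVT v t := lt_of_lt_of_le hfpos (hf_le_pVT v t z)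
        have h2 : 0 < pZT z t := lt_of_lt_of_le hfpos (hf_le_pZT v t z)
        have harg : (f v t z / pT t) / ((pVT v t / pT t) * (pZT z t / pT t))
            = f v t z * pT t / (pVT v t * pZT z t) := by
          field_simp
        rw [harg, ← mul_assoc, mul_div_assoc', mul_comm (pT t) (f v t z), mul_div_assoc,
          div_self (ne_of_gt hpos), mul_one]
  -- rewrite the RHS in terms of pVT and pZV
  have hpred : ∀ p : SV × ST, pr μ (fun ω => (V ω, T ω)) p = pVT p.1 p.2 := by
    rintro ⟨v, t⟩
    exact hprVT v t
  have hgfun : ∀ v : SV, (fun z => pr (ProbabilityTheory.cond μ {ω | V ω = v}) Z z)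
      = fun z => pZV z v / pV v := by
    intro v
    funext z
    simp only [pr]
    rw [pr_cond_eq' μ (mV v) Z z]
  simp only [hpred, hgfun]
  set Sfin := Finset.univ.filter (fun p : SV × ST => 0 < pVT p.1 p.2) with hSfin
  -- nonnegativity of each summand on the RHS
  have hgsum : ∀ v, 0 < pV v → ∑ z, pZV z v / pV v = 1 := by
    intro v hv
    rw [← Finset.sum_div, ← hV_sumZ, div_self (ne_of_gt hv)]
  have hklnn : ∀ p ∈ Sfin, (0 : EReal) ≤ klDiv (fun z => pZV z p.1 / pV p.1) (q p.2) := by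
    rintro ⟨v, t⟩ hp
    have hvt : 0 < pVT v t := by
      have := (Finset.mem_filter.mp hp).2
      simpa using this
    have hpVpos : 0 < pV v := lt_of_lt_of_le hvt (hpVT_le_pV v t)
    simp only [klDiv]
    split_ifs with hac
    · have := gibbs' (fun z => pZV z v / pV v) (q t)
        (fun z => div_nonneg (pZVnn z v) (pVnn v)) (hq_nonneg t)
        (by rw [hq_sum, hgsum v hpVpos]) hac
      exact_mod_cast this
    · exact le_top
  have htermnn : ∀ p ∈ Sfin,
      (0 : EReal) ≤ (pVT p.1 p.2 : EReal) * klDiv (fun z => pZV z p.1 / pV p.1) (q p.2) := by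
    intro p hp
    exact mul_nonneg (by exact_mod_cast pVTnn p.1 p.2) (hklnn p hp)
  by_cases hAC : ∀ p ∈ Sfin, ∀ z, q p.2 z = 0 → pZV z p.1 / pV p.1 = 0
  · -- absolutely continuous case: everything is real-valued
    have hterm : ∀ p ∈ Sfin,
        ((pVT p.1 p.2 : EReal) * klDiv (fun z => pZV z p.1 / pV p.1) (q p.2))
        = ((pVT p.1 p.2 *
            ∑ z, (pZV z p.1 / pV p.1) * Real.log ((pZV z p.1 / pV p.1) / q p.2 z) : ℝ)
              : EReal) := by
      intro p hp
      simp only [klDiv]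
      rw [if_pos (hAC p hp), ← EReal.coe_mul]
    rw [Finset.sum_congr rfl hterm, ← coe_sum_EReal]
    rw [EReal.coe_le_coe_iff]
    -- now a purely real inequality
    have hRS : ∑ p ∈ Sfin,
        pVT p.1 p.2 * ∑ z, (pZV z p.1 / pV p.1) * Real.log ((pZV z p.1 / pV p.1) / q p.2 z)
        = ∑ v, ∑ t, ∑ z, f v t z * Real.log (f v t z / (pVT v t * q t z)) := by
      rw [hSfin, Finset.sum_filter, Fintype.sum_prod_type]
      refine Finset.sum_congr rfl fun v _ => Finset.sum_congr rfl fun t _ => ?_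
      split_ifs with hvt
      · rw [Finset.mul_sum]
        refine Finset.sum_congr rfl fun z _ => ?_
        rw [hg v t z hvt]
        rcases eq_or_lt_of_le (fnn v t z) with hf0 | hfpos
        · rw [← hf0]
          simp
        · rw [div_div, ← mul_assoc, mul_div_assoc', mul_comm (pVT v t) (f v t z),
            mul_div_assoc, div_self (ne_of_gt hvt), mul_one]
      · have h0 : pVT v t = 0 := le_antisymm (not_lt.mp hvt) (pVTnn v t)
        symm
        refine Finset.sum_eq_zero fun z _ => ?_
        have hf0 : f v t z = 0 :=
          le_antisymm (h0 ▸ hf_le_pVT v t z) (fnn v t z)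
        rw [hf0, zero_mul]
    rw [hRS, hCMI, Finset.sum_comm]
    -- compare term by term after grouping over v
    have hq_pos : ∀ v t z, 0 < f v t z → 0 < q t z := by
      intro v t z hfpos
      have hvt : 0 < pVT v t := lt_of_lt_of_le hfpos (hf_le_pVT v t z)
      rcases eq_or_lt_of_le (hq_nonneg t z) with h0 | h
      · exfalso
        have hmem : (v, t) ∈ Sfin := by
          rw [hSfin]
          simp [hvt]
        have := hAC (v, t) hmem z h0.symm
        rw [hg v t z hvt] at this
        have hf0 : f v t z = 0 := by
          rcases div_eq_zero_iff.mp this with h | h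
          · exact h
          · exact absurd h (ne_of_gt hvt)
        linarith
      · exact h
    have hD : ∀ t z, (∑ v, (f v t z * Real.log (f v t z / (pVT v t * q t z))
          - f v t z * Real.log (f v t z * pT t / (pVT v t * pZT z t))))
        = pZT z t * Real.log (pZT z t / (pT t * q t z)) := by
      intro t z
      have hterm2 : ∀ v, f v t z * Real.log (f v t z / (pVT v t * q t z))
          - f v t z * Real.log (f v t z * pT t / (pVT v t * pZT z t))
          = f v t z * Real.log (pZT z t / (pT t * q t z)) := by
        intro v
        rcases eq_or_lt_of_le (fnn v t z) with hf0 | hfpos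
        · rw [← hf0]
          ring
        · have h1 : 0 < pVT v t := lt_of_lt_of_le hfpos (hf_le_pVT v t z)
          have h2 : 0 < pZT z t := lt_of_lt_of_le hfpos (hf_le_pZT v t z)
          have h3 : 0 < pT t := lt_of_lt_of_le h1 (hpVT_le_pT v t)
          have h4 : 0 < q t z := hq_pos v t z hfpos
          have hprod : f v t z / (pVT v t * q t z)
              = (f v t z * pT t / (pVT v t * pZT z t)) * (pZT z t / (pT t * q t z)) := by
            field_simp
          rw [hprod, Real.log_mul (by positivity) (by positivity)]
          ring
      calc (∑ v, (f v t z * Real.log (f v t z / (pVT v t * q t z))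
              - f v t z * Real.log (f v t z * pT t / (pVT v t * pZT z t))))
          = ∑ v, f v t z * Real.log (pZT z t / (pT t * q t z)) :=
            Finset.sum_congr rfl fun v _ => hterm2 v
        _ = (∑ v, f v t z) * Real.log (pZT z t / (pT t * q t z)) := by
            rw [Finset.sum_mul]
        _ = pZT z t * Real.log (pZT z t / (pT t * q t z)) := by rw [← hZT_sum]
    have hgibbs : (0:ℝ) ≤ ∑ t, ∑ z, pZT z t * Real.log (pZT z t / (pT t * q t z)) := by
      have hac2 : ∀ p : ST × SZ, pT p.1 * q p.1 p.2 = 0 → pZT p.2 p.1 = 0 := by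
        rintro ⟨t, z⟩ h
        rcases mul_eq_zero.mp h with h | h
        · refine le_antisymm ?_ (pZTnn z t)
          rw [← h]
          exact hpZT_le_pT z t
        · by_contra hne
          have hpos : 0 < pZT z t := lt_of_le_of_ne (pZTnn z t) (Ne.symm hne)
          have hex : ∃ v, 0 < f v t z := by
            by_contra hno
            push_neg at hno
            have : pZT z t = 0 := by
              rw [hZT_sum]
              exact Finset.sum_eq_zero fun v _ => le_antisymm (hno v) (fnn v t z)
            linarith
          obtain ⟨v, hv⟩ := hex
          exact absurd h (ne_of_gt (hq_pos v t z hv))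
      have hsum2 : ∑ p : ST × SZ, pT p.1 * q p.1 p.2 ≤ ∑ p : ST × SZ, pZT p.2 p.1 := by
        rw [Fintype.sum_prod_type, Fintype.sum_prod_type]
        apply le_of_eq
        refine Finset.sum_congr rfl fun t _ => ?_
        show ∑ z : SZ, pT t * q t z = ∑ z : SZ, pZT z t
        rw [← Finset.mul_sum, hq_sum, mul_one, ← hT_sumZ]
      have := gibbs' (fun p : ST × SZ => pZT p.2 p.1) (fun p : ST × SZ => pT p.1 * q p.1 p.2)
        (fun p => pZTnn p.2 p.1) (fun p => mul_nonneg (pTnn p.1) (hq_nonneg p.1 p.2))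
        hsum2 hac2
      rw [Fintype.sum_prod_type] at this
      exact this
    have hsplit : ∑ v, ∑ t, ∑ z, f v t z * Real.log (f v t z / (pVT v t * q t z))
        - ∑ v, ∑ t, ∑ z, f v t z * Real.log (f v t z * pT t / (pVT v t * pZT z t))
        = ∑ t, ∑ z, pZT z t * Real.log (pZT z t / (pT t * q t z)) := by
      rw [← Finset.sum_sub_distrib]
      simp only [← Finset.sum_sub_distrib]
      rw [Finset.sum_comm]
      refine Finset.sum_congr rfl fun t _ => ?_
      rw [Finset.sum_comm]
      exact Finset.sum_congr rfl fun z _ => hD t z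
    linarith
  · -- non-absolutely-continuous case: the RHS is ⊤
    push_neg at hAC
    obtain ⟨p0, hp0, z0, hq0, hg0⟩ := hAC
    have htop : (pVT p0.1 p0.2 : EReal) * klDiv (fun z => pZV z p0.1 / pV p0.1) (q p0.2)
        = ⊤ := by
      have hvt : 0 < pVT p0.1 p0.2 := by
        have := (Finset.mem_filter.mp hp0).2
        simpa using this
      simp only [klDiv]
      rw [if_neg (by push_neg; exact ⟨z0, hq0, hg0⟩)]
      exact EReal.coe_mul_top_of_pos hvt
    calc (CMI μ V Z T : EReal) ≤ ⊤ := le_top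
      _ = (pVT p0.1 p0.2 : EReal) * klDiv (fun z => pZV z p0.1 / pV p0.1) (q p0.2) :=
          htop.symm
      _ ≤ ∑ p ∈ Sfin, (pVT p.1 p.2 : EReal) * klDiv (fun z => pZV z p.1 / pV p.1) (q p.2) :=
          Finset.single_le_sum htermnn hp0

end DisNCL
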